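/- Fix real numbers s with 0 < s < 1 and λ > 0, and for ρ > 0 define u(ρ) = ρ^s · (1/Γ(s)) ∫₀^∞ e^{−ρ²/(4τ)} e^{−τ λ²} τ^{−s/2 − 1} dτ. Then u(ρ) converges as ρ → 0⁺ and its limit equals 2^s Γ(s/2)/Γ(s); in particular the boundary value is independent of λ. -/

import Mathlib

open MeasureTheory Real Filter

-- value of the limit integral
lemma aux_val (s : ℝ) (hs : 0 < s) :
    ∫ σ in Set.Ioi (0:ℝ), Real.exp (-1 / (4 * σ)) * σ ^ (-s / 2 - 1)
      = 2 ^ s * Real.Gamma (s / 2) := by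
  have h := integral_comp_rpow_Ioi (fun σ : ℝ => Real.exp (-1 / (4 * σ)) * σ ^ (-s / 2 - 1))
    (p := -1) (by norm_num)
  rw [← h]
  have h2 : ∀ x ∈ Set.Ioi (0:ℝ),
      (|(-1 : ℝ)| * x ^ ((-1:ℝ) - 1)) •
        (Real.exp (-1 / (4 * x ^ (-1:ℝ))) * (x ^ (-1:ℝ)) ^ (-s / 2 - 1))
      = x ^ (s / 2 - 1) * Real.exp (-((4:ℝ)⁻¹ * x)) := by
    intro x hx
    have hx0 : (0:ℝ) < x := hx
    rw [Real.rpow_neg_one, Real.inv_rpow hx0.le, ← Real.rpow_neg hx0.le]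
    have e1 : -1 / (4 * x⁻¹) = -((4:ℝ)⁻¹ * x) := by field_simp
    rw [e1, smul_eq_mul, abs_neg, abs_one, one_mul]
    rw [show -(-s/2-1) = s/2+1 by ring]
    rw [← mul_assoc, mul_comm (x ^ ((-1:ℝ)-1)) _, mul_assoc, ← Real.rpow_add hx0]
    ring_nf
  rw [setIntegral_congr_fun measurableSet_Ioi h2]
  have := integral_rpow_mul_exp_neg_mul_Ioi (a := s/2) (r := (4:ℝ)⁻¹)
    (by linarith) (by norm_num)
  rw [this]
  norm_num
  rw [show ((4:ℝ) = 2 ^ (2:ℝ)) by norm_num, ← Real.rpow_mul (by norm_num)]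
  ring_nf
  exact Or.inl trivial

-- integrability of the dominating function
lemma aux_int (s : ℝ) (hs : 0 < s) :
    IntegrableOn (fun σ : ℝ => Real.exp (-1 / (4 * σ)) * σ ^ (-s / 2 - 1)) (Set.Ioi 0) := by
  rw [← integrableOn_Ioi_comp_rpow_iff' (p := -1)
    (f := fun σ : ℝ => Real.exp (-1 / (4 * σ)) * σ ^ (-s / 2 - 1)) (by norm_num)]
  have h0 : IntegrableOn (fun x : ℝ => x ^ (s/2 - 1) * Real.exp (-(4:ℝ)⁻¹ * x ^ (1:ℝ)))
      (Set.Ioi 0) :=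
    integrableOn_rpow_mul_exp_neg_mul_rpow (by linarith) one_pos (by norm_num)
  refine h0.congr_fun (fun x hx => ?_) measurableSet_Ioi
  have hx0 : (0:ℝ) < x := hx
  beta_reduce
  rw [Real.rpow_one, Real.rpow_neg_one, Real.inv_rpow hx0.le, ← Real.rpow_neg hx0.le]
  have e1 : -1 / (4 * x⁻¹) = -((4:ℝ)⁻¹ * x) := by field_simp
  rw [e1, smul_eq_mul, show -(-s/2-1) = s/2+1 by ring,
    ← mul_assoc, mul_comm (x ^ ((-1:ℝ)-1)) _, mul_assoc, ← Real.rpow_add hx0]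
  ring_nf

-- substitution τ = ρ² σ
lemma aux_subst (s lam ρ : ℝ) (hρ : 0 < ρ) :
    (∫ τ in Set.Ioi (0:ℝ),
        Real.exp (-ρ ^ 2 / (4 * τ)) * Real.exp (-τ * lam ^ 2) * τ ^ (-s / 2 - 1))
      = ρ ^ (-s) * ∫ σ in Set.Ioi (0:ℝ),
        Real.exp (-1 / (4 * σ)) * Real.exp (-(ρ ^ 2 * lam ^ 2) * σ) * σ ^ (-s / 2 - 1) := by
  have hρ2 : (0:ℝ) < ρ ^ 2 := by positivity
  have h := integral_comp_mul_left_Ioi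
    (fun τ : ℝ => Real.exp (-ρ ^ 2 / (4 * τ)) * Real.exp (-τ * lam ^ 2) * τ ^ (-s / 2 - 1))
    0 hρ2
  rw [mul_zero, smul_eq_mul] at h
  have h2 : ∀ σ ∈ Set.Ioi (0:ℝ),
      Real.exp (-ρ ^ 2 / (4 * (ρ ^ 2 * σ))) * Real.exp (-(ρ ^ 2 * σ) * lam ^ 2)
          * (ρ ^ 2 * σ) ^ (-s / 2 - 1)
      = (ρ ^ 2) ^ (-s / 2 - 1) *
          (Real.exp (-1 / (4 * σ)) * Real.exp (-(ρ ^ 2 * lam ^ 2) * σ) * σ ^ (-s / 2 - 1)) := by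
    intro σ hσ
    have hσ0 : (0:ℝ) < σ := hσ
    rw [Real.mul_rpow hρ2.le hσ0.le]
    have e1 : -ρ ^ 2 / (4 * (ρ ^ 2 * σ)) = -1 / (4 * σ) := by
      field_simp
    have e2 : -(ρ ^ 2 * σ) * lam ^ 2 = -(ρ ^ 2 * lam ^ 2) * σ := by ring
    rw [e1, e2]; ring
  rw [setIntegral_congr_fun measurableSet_Ioi h2, integral_const_mul] at h
  beta_reduce at h
  rw [eq_comm, inv_mul_eq_iff_eq_mul₀ hρ2.ne'] at h
  have : (∫ τ in Set.Ioi (0:ℝ),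
      Real.exp (-ρ ^ 2 / (4 * τ)) * Real.exp (-τ * lam ^ 2) * τ ^ (-s / 2 - 1))
      = ρ ^ 2 * ((ρ ^ 2) ^ (-s / 2 - 1) * ∫ σ in Set.Ioi (0:ℝ),
        Real.exp (-1 / (4 * σ)) * Real.exp (-(ρ ^ 2 * lam ^ 2) * σ) * σ ^ (-s / 2 - 1)) := h
  rw [this, ← mul_assoc]
  congr 1
  rw [← Real.rpow_natCast ρ 2, ← Real.rpow_mul hρ.le, ← Real.rpow_add hρ]
  norm_num
  ring_nf

/-- The solution of the scalar extension problem attains its boundary value: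
with `u(ρ) = ρ^s Γ(s)⁻¹ ∫₀^∞ e^{−ρ²/(4τ)} e^{−τλ²} τ^{−s/2−1} dτ`,
`u(ρ) → 2^s Γ(s/2)/Γ(s)` as `ρ → 0⁺`, independently of `λ`. -/
theorem stmt9 (s lam : ℝ) (hs : 0 < s) (hs1 : s < 1) (hlam : 0 < lam)
    (u : ℝ → ℝ)
    (hu : ∀ ρ : ℝ, u ρ = ρ ^ s * ((1 / Real.Gamma s) *
      ∫ τ in Set.Ioi (0 : ℝ),
        Real.exp (-ρ ^ 2 / (4 * τ)) * Real.exp (-τ * lam ^ 2) * τ ^ (-s / 2 - 1))) :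
    Tendsto u (nhdsWithin 0 (Set.Ioi 0))
      (nhds (2 ^ s * Real.Gamma (s / 2) / Real.Gamma s)) := by
  set F : ℝ → ℝ := fun ρ => (1 / Real.Gamma s) *
      ∫ σ in Set.Ioi (0:ℝ),
        Real.exp (-1 / (4 * σ)) * Real.exp (-(ρ ^ 2 * lam ^ 2) * σ) * σ ^ (-s / 2 - 1) with hF
  have hFu : ∀ ρ ∈ Set.Ioi (0:ℝ), F ρ = u ρ := by
    intro ρ hρ
    have hρ0 : (0:ℝ) < ρ := hρ
    rw [hu ρ, aux_subst s lam ρ hρ0, hF]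
    have : ρ ^ s * ρ ^ (-s) = 1 := by
      rw [← Real.rpow_add hρ0]; simp
    set I := ∫ σ in Set.Ioi (0:ℝ),
        Real.exp (-1 / (4 * σ)) * Real.exp (-(ρ ^ 2 * lam ^ 2) * σ) * σ ^ (-s / 2 - 1)
    calc (1 / Real.Gamma s) * I = (ρ ^ s * ρ ^ (-s)) * ((1 / Real.Gamma s) * I) := by
          rw [this, one_mul]
      _ = ρ ^ s * (1 / Real.Gamma s * (ρ ^ (-s) * I)) := by ring
  have hlim : Tendsto F (nhdsWithin 0 (Set.Ioi 0))
      (nhds (2 ^ s * Real.Gamma (s / 2) / Real.Gamma s)) := by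
    have hmain : Tendsto (fun ρ : ℝ => ∫ σ in Set.Ioi (0:ℝ),
        Real.exp (-1 / (4 * σ)) * Real.exp (-(ρ ^ 2 * lam ^ 2) * σ) * σ ^ (-s / 2 - 1))
        (nhdsWithin 0 (Set.Ioi 0))
        (nhds (∫ σ in Set.Ioi (0:ℝ), Real.exp (-1 / (4 * σ)) * σ ^ (-s / 2 - 1))) := by
      apply tendsto_integral_filter_of_dominated_convergence
        (bound := fun σ : ℝ => Real.exp (-1 / (4 * σ)) * σ ^ (-s / 2 - 1))
      · refine Eventually.of_forall fun ρ => ?_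
        apply Measurable.aestronglyMeasurable
        fun_prop
      · refine Eventually.of_forall fun ρ => ?_
        rw [ae_restrict_iff' measurableSet_Ioi]
        refine Eventually.of_forall fun σ hσ => ?_
        have hσ0 : (0:ℝ) < σ := hσ
        have h1 : Real.exp (-(ρ ^ 2 * lam ^ 2) * σ) ≤ 1 := by
          rw [Real.exp_le_one_iff]
          have h2 : (0:ℝ) ≤ ρ ^ 2 * lam ^ 2 * σ := by positivity
          linarith
        have hnn : (0:ℝ) ≤ Real.exp (-1 / (4 * σ)) * Real.exp (-(ρ ^ 2 * lam ^ 2) * σ)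
            * σ ^ (-s / 2 - 1) := by positivity
        rw [Real.norm_eq_abs, abs_of_nonneg hnn]
        calc Real.exp (-1 / (4 * σ)) * Real.exp (-(ρ ^ 2 * lam ^ 2) * σ) * σ ^ (-s / 2 - 1)
            ≤ Real.exp (-1 / (4 * σ)) * 1 * σ ^ (-s / 2 - 1) := by
              apply mul_le_mul_of_nonneg_right _ (Real.rpow_nonneg hσ0.le _)
              exact mul_le_mul_of_nonneg_left h1 (Real.exp_pos _).le
          _ = Real.exp (-1 / (4 * σ)) * σ ^ (-s / 2 - 1) := by ring
      · exact aux_int s hs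
      · rw [ae_restrict_iff' measurableSet_Ioi]
        refine Eventually.of_forall fun σ hσ => ?_
        have hc : Tendsto (fun ρ : ℝ => Real.exp (-(ρ ^ 2 * lam ^ 2) * σ)) (nhds 0)
            (nhds 1) := by
          have : Continuous (fun ρ : ℝ => Real.exp (-(ρ ^ 2 * lam ^ 2) * σ)) := by fun_prop
          have h0 := this.tendsto 0
          simpa using h0
        have := ((tendsto_const_nhds (x := Real.exp (-1 / (4 * σ)))).mul hc).mul
          (tendsto_const_nhds (x := σ ^ (-s / 2 - 1)))
        rw [mul_one] at this
        exact this.mono_left nhdsWithin_le_nhds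
    have := hmain.const_mul (1 / Real.Gamma s)
    rw [aux_val s hs] at this
    convert this using 2
    ring
  exact hlim.congr' (eventually_nhdsWithin_of_forall hFu)
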